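/- If a configuration C = p_r … p_s of g-2PATH is of Type I (both hands free), then mft_{g-2PATH}(C) = −r + s + max{−r, s}. -/

import Mathlib

open scoped Classical

/-- Two grid positions are adjacent iff their L1 distance is 1. -/
def gridAdj (p q : ℤ × ℤ) : Prop := |p.1 - q.1| + |p.2 - q.2| = 1

lemma gridAdj_symm {p q : ℤ × ℤ} (h : gridAdj p q) : gridAdj q p := by
  unfold gridAdj at h ⊢
  rw [abs_sub_comm q.1 p.1, abs_sub_comm q.2 p.2]
  exact h

lemma gridAdj_irrefl (p : ℤ × ℤ) : ¬ gridAdj p p := by simp [gridAdj]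

/-- The graph induced on a set `X` of grid positions. -/
def gridGraph (X : Set (ℤ × ℤ)) : SimpleGraph (ℤ × ℤ) where
  Adj p q := p ∈ X ∧ q ∈ X ∧ gridAdj p q
  symm := ⟨fun p q h => ⟨h.2.1, h.1, gridAdj_symm h.2.2⟩⟩
  loopless := ⟨fun p h => gridAdj_irrefl p h.2.2⟩

/-- Graph distance inside the set `X`. -/
noncomputable def gdist (X : Set (ℤ × ℤ)) (p q : ℤ × ℤ) : ℕ := (gridGraph X).dist p q

/-- The boundary condition of `p` in `X`: it records which of the four
neighbors of `p` lie in `X`. -/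
def bcond (X : Set (ℤ × ℤ)) (p : ℤ × ℤ) : Set (ℤ × ℤ) := {q ∈ X | gridAdj p q}

/-- The set `M(v, t, X)` of nodes `w` with `d(v_gen, w) + d(w, v) ≤ t`. -/
noncomputable def Mset (v : ℤ × ℤ) (t : ℕ) (X : Set (ℤ × ℤ)) : Set (ℤ × ℤ) :=
  {w ∈ X | gdist X (0, 0) w + gdist X w v ≤ t}

/-- The available information (local map) `ai(v, t, X)`; `none` plays the role of `Q`. -/
noncomputable def ai (v : ℤ × ℤ) (t : ℕ) (X : Set (ℤ × ℤ)) :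
    Option (ℕ × (ℤ × ℤ) × Set ((ℤ × ℤ) × Set (ℤ × ℤ))) :=
  if v ∈ X ∧ (gridGraph X).Reachable (0, 0) v ∧ gdist X (0, 0) v ≤ t then
    some (t, v, (fun w => (w, bcond X w)) '' Mset v t X)
  else none

/-- `X ≡'_{t,v} Y` : `v ∈ X ∩ Y` and `ai(v,t,X) = ai(v,t,Y) ≠ Q`. -/
def equivAt (t : ℕ) (v : ℤ × ℤ) (X Y : Set (ℤ × ℤ)) : Prop :=
  v ∈ X ∧ v ∈ Y ∧ ai v t X = ai v t Y ∧ ai v t X ≠ none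

/-- A configuration: a finite connected set of positions containing the origin. -/
def IsConfig (X : Set (ℤ × ℤ)) : Prop :=
  X.Finite ∧ (0, 0) ∈ X ∧ ∀ p ∈ X, ∀ q ∈ X, (gridGraph X).Reachable p q

/-- `Y` is a consistent extension of the subset `M` of `X`. -/
def ConsExt (X M Y : Set (ℤ × ℤ)) : Prop := M ⊆ Y ∧ ∀ w ∈ M, bcond X w = bcond Y w

/-- `p` restricted to the index interval `[r, s]` is a simple, non-self-touching
lattice path through the origin `p 0 = (0,0)` (a g-2PATH configuration). -/
def IsPathOn (p : ℤ → ℤ × ℤ) (r s : ℤ) : Prop :=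
  r ≤ 0 ∧ 0 ≤ s ∧ p 0 = (0, 0) ∧
    (∀ m, r ≤ m → m < s → gridAdj (p m) (p (m + 1))) ∧
    (∀ m n, r ≤ m → m ≤ s → r ≤ n → n ≤ s → p m = p n → m = n) ∧
    (∀ m n, r ≤ m → m + 2 ≤ n → n ≤ s → ¬ gridAdj (p m) (p n))

/-- A configuration of g-2PATH. -/
structure GPath2 where
  r : ℤ
  s : ℤ
  p : ℤ → ℤ × ℤ
  isPath : IsPathOn p r s

/-- The set of positions of the path. -/
def pathSet (C : GPath2) : Set (ℤ × ℤ) := C.p '' Set.Icc C.r C.s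

/-- The path obtained from the sub-path `p_i … p_j` of `C` by appending the
sequence `x0` on the left and `x1` on the right. -/
def extFun (C : GPath2) (i j : ℤ) (x0 x1 : List (ℤ × ℤ)) : ℤ → ℤ × ℤ := fun m =>
  if m < i then x0.getD (m - (i - x0.length)).toNat (0, 0)
  else if m ≤ j then C.p m
  else x1.getD (m - (j + 1)).toNat (0, 0)

/-- `(x0, x1)` is a pair of sequences of positions such that `x0 p_i … p_j x1`
is a configuration of g-2PATH that is a consistent extension of the sub-path
`p_i … p_j` of `C` (boundary conditions of `p_i … p_j` are preserved). -/
def IsExtPair (C : GPath2) (i j : ℤ) (x0 x1 : List (ℤ × ℤ)) : Prop :=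
  C.r ≤ i ∧ i ≤ 0 ∧ 0 ≤ j ∧ j ≤ C.s ∧
    IsPathOn (extFun C i j x0 x1) (i - x0.length) (j + x1.length) ∧
    ∀ m, i ≤ m → m ≤ j →
      bcond (pathSet C) (C.p m) =
        bcond (extFun C i j x0 x1 '' Set.Icc (i - (x0.length : ℤ)) (j + (x1.length : ℤ)))
          (C.p m)

def Wset (C : GPath2) (i j : ℤ) : Set (List (ℤ × ℤ) × List (ℤ × ℤ)) :=
  {w | IsExtPair C i j w.1 w.2}

def Uset (C : GPath2) (i j : ℤ) : Set (List (ℤ × ℤ)) := Prod.fst '' Wset C i j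

def Vset (C : GPath2) (i j : ℤ) : Set (List (ℤ × ℤ)) := Prod.snd '' Wset C i j

/-- `f(i,j)`: the supremum of lengths of consistent left extensions. -/
noncomputable def fval (C : GPath2) (i j : ℤ) : ENat := ⨆ x ∈ Uset C i j, (x.length : ENat)

/-- `g(i,j)`: the supremum of lengths of consistent right extensions. -/
noncomputable def gval (C : GPath2) (i j : ℤ) : ENat := ⨆ x ∈ Vset C i j, (x.length : ENat)

/-- `NI(i,j)` : `W(i,j) = U(i,j) × V(i,j)`. -/
def NI (C : GPath2) (i j : ℤ) : Prop := Wset C i j = Uset C i j ×ˢ Vset C i j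

def Kset (C : GPath2) : Set (ℤ × ℤ) :=
  {ij | C.r ≤ ij.1 ∧ ij.1 ≤ 0 ∧ 0 ≤ ij.2 ∧ ij.2 ≤ C.s ∧ (Wset C ij.1 ij.2).Finite}

def Iset (C : GPath2) : Set (ℤ × ℤ) :=
  {ij | C.r ≤ ij.1 - 1 ∧ ij.1 ≤ 0 ∧ 0 ≤ ij.2 ∧ ij.2 ≤ C.s ∧
    (Wset C ij.1 ij.2).Infinite ∧ (Wset C (ij.1 - 1) ij.2).Finite}

def Jset (C : GPath2) : Set (ℤ × ℤ) :=
  {ij | C.r ≤ ij.1 ∧ ij.1 ≤ 0 ∧ 0 ≤ ij.2 ∧ ij.2 + 1 ≤ C.s ∧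
    (Wset C ij.1 ij.2).Infinite ∧ (Wset C ij.1 (ij.2 + 1)).Finite}

/-- The condition of noninterference of extensions. -/
def CNI (C : GPath2) : Prop := ∀ ij ∈ Kset C ∪ Iset C ∪ Jset C, NI C ij.1 ij.2

/-- The radius of `X`: the largest distance from the origin within `X`. -/
noncomputable def rad (X : Set (ℤ × ℤ)) : ℕ := sSup {n | ∃ v ∈ X, gdist X (0, 0) v = n}

def EquivStep (t : ℕ) (C C' : GPath2) : Prop := ∃ v, equivAt t v (pathSet C) (pathSet C')

/-- `t` is safe for `C`: some chain `C ≡'_t C₁ ≡'_t … ≡'_t C'` ends in a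
configuration of radius `> t`. -/
def Safe (t : ℕ) (C : GPath2) : Prop :=
  ∃ C' : GPath2, Relation.ReflTransGen (EquivStep t) C C' ∧ t < rad (pathSet C')

/-- The minimum firing time of `C` for g-2PATH: the least unsafe time. -/
noncomputable def mft (C : GPath2) : ℕ := sInf {t | ¬ Safe t C}

/-- `T̃ = min_{r ≤ i ≤ 0 ≤ j ≤ s} max {−2i + j + g(i,j), 2j − i + f(i,j)}`. -/
noncomputable def Ttilde (C : GPath2) : ENat :=
  sInf {x : ENat | ∃ i j : ℤ, C.r ≤ i ∧ i ≤ 0 ∧ 0 ≤ j ∧ j ≤ C.s ∧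
    x = max (((-2 * i + j).toNat : ENat) + gval C i j)
            (((2 * j - i).toNat : ENat) + fval C i j)}

/-- The left hand `p_r … p_0` of `C` is free. -/
def FreeLeft (C : GPath2) : Prop := C.r = 0 ∨ (C.r < 0 ∧ fval C (C.r + 1) C.s = ⊤)

/-- The right hand `p_0 … p_s` of `C` is free. -/
def FreeRight (C : GPath2) : Prop := C.s = 0 ∨ (0 < C.s ∧ gval C C.r (C.s - 1) = ⊤)


/-! ### Auxiliary lemmas -/

section Aux

lemma GPath2.hr0 (D : GPath2) : D.r ≤ 0 := D.isPath.1
lemma GPath2.hs0 (D : GPath2) : 0 ≤ D.s := D.isPath.2.1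
lemma GPath2.horig (D : GPath2) : D.p 0 = (0, 0) := D.isPath.2.2.1
lemma GPath2.hadj (D : GPath2) : ∀ m, D.r ≤ m → m < D.s → gridAdj (D.p m) (D.p (m + 1)) :=
  D.isPath.2.2.2.1
lemma GPath2.hinj (D : GPath2) :
    ∀ m n, D.r ≤ m → m ≤ D.s → D.r ≤ n → n ≤ D.s → D.p m = D.p n → m = n :=
  D.isPath.2.2.2.2.1
lemma GPath2.hnt (D : GPath2) :
    ∀ m n, D.r ≤ m → m + 2 ≤ n → n ≤ D.s → ¬ gridAdj (D.p m) (D.p n) :=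
  D.isPath.2.2.2.2.2

lemma p_mem_pathSet (D : GPath2) {k : ℤ} (h1 : D.r ≤ k) (h2 : k ≤ D.s) :
    D.p k ∈ pathSet D := ⟨k, ⟨h1, h2⟩, rfl⟩

lemma mem_pathSet {D : GPath2} {x : ℤ × ℤ} :
    x ∈ pathSet D ↔ ∃ k, D.r ≤ k ∧ k ≤ D.s ∧ D.p k = x := by
  constructor
  · rintro ⟨k, ⟨h1, h2⟩, rfl⟩; exact ⟨k, h1, h2, rfl⟩
  · rintro ⟨k, h1, h2, rfl⟩; exact ⟨k, ⟨h1, h2⟩, rfl⟩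

/-- Adjacent cells of a path have consecutive indices. -/
lemma adj_index (D : GPath2) {a b : ℤ} (ha1 : D.r ≤ a) (ha2 : a ≤ D.s)
    (hb1 : D.r ≤ b) (hb2 : b ≤ D.s) (h : gridAdj (D.p a) (D.p b)) :
    b = a + 1 ∨ a = b + 1 := by
  rcases lt_trichotomy a b with hab | hab | hab
  · left
    by_contra hne
    exact D.hnt a b ha1 (by omega) hb2 h
  · exact absurd h (hab ▸ gridAdj_irrefl _)
  · right
    by_contra hne
    exact D.hnt b a hb1 (by omega) ha2 (gridAdj_symm h)

lemma walk_bound (D : GPath2) :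
    ∀ {u v : ℤ × ℤ} (W : (gridGraph (pathSet D)).Walk u v) {a b : ℤ},
      D.r ≤ a → a ≤ D.s → D.r ≤ b → b ≤ D.s → u = D.p a → v = D.p b →
      (a - b).natAbs ≤ W.length := by
  intro u v W
  induction W with
  | nil =>
    intro a b ha1 ha2 hb1 hb2 hu hv
    have : a = b := D.hinj a b ha1 ha2 hb1 hb2 (by rw [← hu, ← hv])
    simp [this]
  | @cons u w v h W ih =>
    intro a b ha1 ha2 hb1 hb2 hu hv
    obtain ⟨c, hc1, hc2, hcw⟩ := mem_pathSet.1 (h : _ ∧ _ ∧ _).2.1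
    have hadj : gridAdj (D.p a) (D.p c) := by rw [hcw, ← hu]; exact (h : _ ∧ _ ∧ _).2.2
    have h1 : c = a + 1 ∨ a = c + 1 := adj_index D ha1 ha2 hc1 hc2 hadj
    have h2 : (c - b).natAbs ≤ W.length := ih hc1 hc2 hb1 hb2 hcw.symm hv
    simp only [SimpleGraph.Walk.length_cons]
    omega

lemma walk_exists (D : GPath2) :
    ∀ (n : ℕ) (a : ℤ), D.r ≤ a → a + n ≤ D.s →
      ∃ W : (gridGraph (pathSet D)).Walk (D.p a) (D.p (a + n)), W.length = n := by
  intro n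
  induction n with
  | zero =>
    intro a _ _
    rw [show a + ((0 : ℕ) : ℤ) = a by push_cast; ring]
    exact ⟨SimpleGraph.Walk.nil, rfl⟩
  | succ n ih =>
    intro a ha1 ha2
    have hlt : a < D.s := by push_cast at ha2 ⊢; omega
    have hadj : (gridGraph (pathSet D)).Adj (D.p a) (D.p (a + 1)) :=
      show _ ∧ _ ∧ _ from ⟨p_mem_pathSet D ha1 (le_of_lt hlt), p_mem_pathSet D (by omega) hlt,
        D.hadj a ha1 hlt⟩
    have hco : a + ((n + 1 : ℕ) : ℤ) = (a + 1) + (n : ℤ) := by push_cast; ring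
    rw [hco]
    obtain ⟨W, hW⟩ := ih (a + 1) (by omega) (by push_cast at ha2 ⊢; omega)
    exact ⟨SimpleGraph.Walk.cons hadj W, by simp [hW]⟩

lemma reach_path (D : GPath2) {a b : ℤ} (ha1 : D.r ≤ a) (ha2 : a ≤ D.s)
    (hb1 : D.r ≤ b) (hb2 : b ≤ D.s) :
    (gridGraph (pathSet D)).Reachable (D.p a) (D.p b) := by
  rcases le_total a b with h | h
  · obtain ⟨W, _⟩ := walk_exists D (b - a).toNat a ha1 (by omega)
    rw [show a + (((b - a).toNat : ℕ) : ℤ) = b by omega] at W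
    exact ⟨W⟩
  · obtain ⟨W, _⟩ := walk_exists D (a - b).toNat b hb1 (by omega)
    rw [show b + (((a - b).toNat : ℕ) : ℤ) = a by omega] at W
    exact (SimpleGraph.Walk.reachable W).symm

lemma gdist_path (D : GPath2) {a b : ℤ} (ha1 : D.r ≤ a) (ha2 : a ≤ D.s)
    (hb1 : D.r ≤ b) (hb2 : b ≤ D.s) :
    gdist (pathSet D) (D.p a) (D.p b) = (a - b).natAbs := by
  refine le_antisymm ?_ ?_
  · rcases le_total a b with h | h
    · obtain ⟨W, hW⟩ := walk_exists D (b - a).toNat a ha1 (by omega)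
      have hd := SimpleGraph.dist_le W
      have hb : b = a + (((b - a).toNat : ℕ) : ℤ) := by omega
      rw [gdist, hb]
      omega
    · obtain ⟨W, hW⟩ := walk_exists D (a - b).toNat b hb1 (by omega)
      have hd := SimpleGraph.dist_le W
      have hb : a = b + (((a - b).toNat : ℕ) : ℤ) := by omega
      rw [gdist, SimpleGraph.dist_comm, hb]
      omega
  · obtain ⟨W, hW⟩ := (reach_path D ha1 ha2 hb1 hb2).exists_walk_length_eq_dist
    rw [gdist, ← hW]
    exact walk_bound D W ha1 ha2 hb1 hb2 rfl rfl

end Aux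

section Aux2

lemma Mset_path (D : GPath2) {m : ℤ} (hm1 : D.r ≤ m) (hm2 : m ≤ D.s) (t : ℕ) :
    Mset (D.p m) t (pathSet D) =
      D.p '' {k | D.r ≤ k ∧ k ≤ D.s ∧ k.natAbs + (k - m).natAbs ≤ t} := by
  have h0 : (0, 0) = D.p 0 := D.horig.symm
  ext x
  constructor
  · rintro ⟨hx, hd⟩
    obtain ⟨k, hk1, hk2, rfl⟩ := mem_pathSet.1 hx
    refine ⟨k, ⟨hk1, hk2, ?_⟩, rfl⟩
    rw [h0, gdist_path D D.hr0 D.hs0 hk1 hk2, gdist_path D hk1 hk2 hm1 hm2] at hd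
    omega
  · rintro ⟨k, ⟨hk1, hk2, hk3⟩, rfl⟩
    refine ⟨p_mem_pathSet D hk1 hk2, ?_⟩
    rw [h0, gdist_path D D.hr0 D.hs0 hk1 hk2, gdist_path D hk1 hk2 hm1 hm2]
    omega

lemma rad_path (D : GPath2) : rad (pathSet D) = (max (-D.r) D.s).toNat := by
  have h0 : (0, 0) = D.p 0 := D.horig.symm
  have hub : ∀ n ∈ {n | ∃ v ∈ pathSet D, gdist (pathSet D) (0, 0) v = n},
      n ≤ (max (-D.r) D.s).toNat := by
    rintro n ⟨v, hv, hd⟩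
    obtain ⟨k, hk1, hk2, rfl⟩ := mem_pathSet.1 hv
    rw [h0, gdist_path D D.hr0 D.hs0 hk1 hk2] at hd
    have h1 := le_max_left (-D.r) D.s
    have h2 := le_max_right (-D.r) D.s
    omega
  have hmem : (max (-D.r) D.s).toNat ∈
      {n | ∃ v ∈ pathSet D, gdist (pathSet D) (0, 0) v = n} := by
    rcases le_total (-D.r) D.s with h | h
    · refine ⟨D.p D.s, p_mem_pathSet D (le_trans D.hr0 D.hs0) le_rfl, ?_⟩
      rw [h0, gdist_path D D.hr0 D.hs0 (le_trans D.hr0 D.hs0) le_rfl, max_eq_right h]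
      have := D.hs0; omega
    · refine ⟨D.p D.r, p_mem_pathSet D le_rfl (le_trans D.hr0 D.hs0), ?_⟩
      rw [h0, gdist_path D D.hr0 D.hs0 le_rfl (le_trans D.hr0 D.hs0), max_eq_left h]
      have := D.hr0; omega
  exact le_antisymm (csSup_le ⟨_, hmem⟩ hub) (le_csSup ⟨_, hub⟩ hmem)

/-- If the local map at `v` covers all of `X`, any configuration equivalent
to `X` at `(t, v)` coincides with `X`. -/
lemma eq_of_equivAt_full {X : Set (ℤ × ℤ)} (D' : GPath2) {t : ℕ} {v : ℤ × ℤ}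
    (h : equivAt t v X (pathSet D')) (h0X : (0, 0) ∈ X)
    (hfull : ∀ w ∈ X, gdist X (0, 0) w + gdist X w v ≤ t) :
    pathSet D' = X := by
  obtain ⟨hvX, hvY, hai, hne⟩ := h
  set Y := pathSet D' with hY
  -- X side of ai is a `some`
  have hcondX : v ∈ X ∧ (gridGraph X).Reachable (0, 0) v ∧ gdist X (0, 0) v ≤ t := by
    by_contra hc
    exact hne (by rw [ai, if_neg hc])
  have hcondY : v ∈ Y ∧ (gridGraph Y).Reachable (0, 0) v ∧ gdist Y (0, 0) v ≤ t := by
    by_contra hc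
    rw [ai, ai, if_pos hcondX, if_neg hc] at hai
    exact Option.some_ne_none _ hai
  have himg : (fun w => (w, bcond X w)) '' Mset v t X
      = (fun w => (w, bcond Y w)) '' Mset v t Y := by
    rw [ai, ai, if_pos hcondX, if_pos hcondY] at hai
    have h3 := Option.some_inj.mp hai
    exact congrArg (fun z : ℕ × (ℤ × ℤ) × Set ((ℤ × ℤ) × Set (ℤ × ℤ)) => z.2.2) h3
  -- M_X = X
  have hMX : Mset v t X = X := by
    apply Set.eq_of_subset_of_subset (fun w hw => hw.1)
    intro w hw; exact ⟨hw, hfull w hw⟩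
  -- M_Y = M_X and bconds agree
  have hsub1 : Mset v t X ⊆ Mset v t Y ∧ ∀ w ∈ Mset v t X, bcond Y w = bcond X w := by
    constructor
    · intro w hw
      have : (w, bcond X w) ∈ (fun w => (w, bcond Y w)) '' Mset v t Y :=
        himg ▸ Set.mem_image_of_mem _ hw
      obtain ⟨u, hu, heq⟩ := this
      obtain ⟨h1, h2⟩ := Prod.mk.injEq .. ▸ heq
      exact h1 ▸ hu
    · intro w hw
      have : (w, bcond X w) ∈ (fun w => (w, bcond Y w)) '' Mset v t Y :=
        himg ▸ Set.mem_image_of_mem _ hw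
      obtain ⟨u, hu, heq⟩ := this
      have h1 : u = w := congrArg Prod.fst heq
      have h2 : bcond Y u = bcond X w := congrArg Prod.snd heq
      exact h1 ▸ h2
  have hsub2 : Mset v t Y ⊆ Mset v t X := by
    intro w hw
    have : (w, bcond Y w) ∈ (fun w => (w, bcond X w)) '' Mset v t X :=
      himg.symm ▸ Set.mem_image_of_mem _ hw
    obtain ⟨u, hu, heq⟩ := this
    have h1 : u = w := congrArg Prod.fst heq
    exact h1 ▸ hu
  have hMeq : Mset v t Y = Mset v t X := le_antisymm hsub2 hsub1.1
  -- Y ⊆ X via walks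
  have hwalk : ∀ {a y : ℤ × ℤ}, (gridGraph Y).Walk a y → a ∈ Mset v t X → y ∈ Mset v t X := by
    intro a y W
    induction W with
    | nil => exact id
    | @cons a b y h W ih =>
      intro ha
      have hb : b ∈ bcond Y a := ⟨(h : _ ∧ _ ∧ _).2.1, (h : _ ∧ _ ∧ _).2.2⟩
      rw [hsub1.2 a ha] at hb
      have hbX : b ∈ X := hb.1
      exact ih (hMX.symm ▸ hbX)
  have hYX : Y ⊆ X := by
    intro y hy
    obtain ⟨k, hk1, hk2, rfl⟩ := mem_pathSet.1 hy
    have h00 : (0, 0) ∈ Mset v t X := hMX.symm ▸ h0X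
    have hreach : (gridGraph Y).Reachable (0, 0) (D'.p k) := by
      rw [show ((0 : ℤ), (0 : ℤ)) = D'.p 0 from D'.horig.symm]
      exact reach_path D' D'.hr0 D'.hs0 hk1 hk2
    obtain ⟨W⟩ := hreach
    exact hMX ▸ hwalk W h00
  have hXY : X ⊆ Y := by
    intro x hx
    exact (hMeq ▸ (hMX.symm ▸ hx : x ∈ Mset v t X) : x ∈ Mset v t Y).1
  exact le_antisymm hYX hXY

end Aux2

section Aux3

lemma origin_mem_pathSet (D : GPath2) : (0, 0) ∈ pathSet D :=
  D.horig ▸ p_mem_pathSet D D.hr0 D.hs0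

lemma not_safe (C : GPath2) : ¬ Safe ((C.s - C.r + max (-C.r) C.s).toNat) C := by
  set Nn := (C.s - C.r + max (-C.r) C.s).toNat with hNn
  have key : ∀ C', Relation.ReflTransGen (EquivStep Nn) C C' → pathSet C' = pathSet C := by
    intro C' h
    induction h with
    | refl => rfl
    | @tail b C' hchain hstep ih =>
      obtain ⟨v, hv⟩ := hstep
      rw [ih] at hv
      have hvX := hv.1
      obtain ⟨m, hm1, hm2, rfl⟩ := mem_pathSet.1 hvX
      refine eq_of_equivAt_full C' hv (origin_mem_pathSet C) ?_
      intro w hw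
      obtain ⟨k, hk1, hk2, rfl⟩ := mem_pathSet.1 hw
      rw [show ((0 : ℤ), (0 : ℤ)) = C.p 0 from C.horig.symm,
        gdist_path C C.hr0 C.hs0 hk1 hk2, gdist_path C hk1 hk2 hm1 hm2]
      have h1 := le_max_left (-C.r) C.s
      have h2 := le_max_right (-C.r) C.s
      have h3 := C.hr0
      have h4 := C.hs0
      omega
  rintro ⟨C', hchain, hrad⟩
  rw [key C' hchain, rad_path C] at hrad
  have h1 := le_max_left (-C.r) C.s
  have h2 := le_max_right (-C.r) C.s
  have h3 := C.hr0
  have h4 := C.hs0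
  rcases max_choice (-C.r) C.s with h | h <;> rw [h] at hrad h1 h2 <;> omega

end Aux3

section Aux4

lemma extFun_eq_mid (C : GPath2) (i j : ℤ) (x0 x1 : List (ℤ × ℤ)) {m : ℤ}
    (h1 : i ≤ m) (h2 : m ≤ j) : extFun C i j x0 x1 m = C.p m := by
  unfold extFun
  rw [if_neg (not_lt.2 h1), if_pos h2]

lemma exists_long_right {C : GPath2} {i j : ℤ} (h : gval C i j = ⊤) (n : ℕ) :
    ∃ x0 x1 : List (ℤ × ℤ), IsExtPair C i j x0 x1 ∧ n ≤ x1.length := by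
  by_contra hc
  push_neg at hc
  have hle : gval C i j ≤ (n : ENat) := by
    rw [gval]
    apply iSup₂_le
    rintro x ⟨⟨x0, x1⟩, hw, rfl⟩
    exact_mod_cast le_of_lt (hc x0 x1 hw)
  rw [h] at hle
  exact (ENat.coe_lt_top n).not_ge hle

lemma exists_long_left {C : GPath2} {i j : ℤ} (h : fval C i j = ⊤) (n : ℕ) :
    ∃ x0 x1 : List (ℤ × ℤ), IsExtPair C i j x0 x1 ∧ n ≤ x0.length := by
  by_contra hc
  push_neg at hc
  have hle : fval C i j ≤ (n : ENat) := by
    rw [fval]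
    apply iSup₂_le
    rintro x ⟨⟨x0, x1⟩, hw, rfl⟩
    exact_mod_cast le_of_lt (hc x0 x1 hw)
  rw [h] at hle
  exact (ENat.coe_lt_top n).not_ge hle

/-- In a maximal-right extension situation, the left extension is forced empty. -/
lemma forced_left_empty {C : GPath2} {x0 x1 : List (ℤ × ℤ)}
    (hx : IsExtPair C C.r (C.s - 1) x0 x1) (hs : 0 < C.s) (hx1 : x1 ≠ []) :
    x0 = [] := by
  by_contra h0ne
  have hlen0 : 1 ≤ x0.length := List.length_pos_iff.2 h0ne
  have hlen1 : 1 ≤ x1.length := List.length_pos_iff.2 hx1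
  obtain ⟨hi1, hi2, hj1, hj2, hP, hbc⟩ := hx
  set i := C.r with hidef
  set j := C.s - 1 with hjdef
  set D : GPath2 := ⟨i - x0.length, j + x1.length, extFun C i j x0 x1, hP⟩ with hD
  set E := extFun C i j x0 x1 with hE
  have hED : D.p = E := rfl
  have hDr : D.r = i - x0.length := rfl
  have hDs : D.s = j + x1.length := rfl
  have hpsD : E '' Set.Icc (i - (x0.length : ℤ)) (j + (x1.length : ℤ)) = pathSet D := rfl
  -- the cell just to the left of p_i
  have hadj1 : gridAdj (E (i - 1)) (E i) := by
    have := D.hadj (i - 1) (by rw [hDr]; omega) (by rw [hDs]; omega)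
    rwa [show i - 1 + 1 = i by ring] at this
  have hEi : E i = C.p i := extFun_eq_mid C i j x0 x1 le_rfl (by omega)
  have hqmem : E (i - 1) ∈ pathSet D := p_mem_pathSet D (by rw [hDr]; omega) (by rw [hDs]; omega)
  have hqbc : E (i - 1) ∈ bcond (pathSet C) (C.p i) := by
    rw [hbc i le_rfl (by omega), hpsD]
    exact ⟨hqmem, gridAdj_symm (hEi ▸ hadj1)⟩
  obtain ⟨⟨k, ⟨hk1, hk2⟩, hkq⟩, hkadj⟩ := hqbc
  -- q = p k with k adjacent index to i
  have hki : k = i + 1 ∨ i = k + 1 := by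
    refine adj_index C le_rfl (by omega) hk1 hk2 ?_
    rw [hkq]; exact hkadj
  rcases hki with hki | hki
  · -- k = i + 1
    rcases le_or_gt k j with hkj | hkj
    · -- p k = E k, contradicting injectivity
      have hEk : E k = C.p k := extFun_eq_mid C i j x0 x1 (by omega) hkj
      have := D.hinj (i - 1) k (by rw [hDr]; omega) (by rw [hDs]; omega)
        (by rw [hDr]; omega) (by rw [hDs]; omega)
        (by show E (i - 1) = E k; rw [hEk]; exact hkq.symm)
      omega
    · -- k = s, i = s - 1, so i = 0, s = 1
      have hi0 : i = 0 ∧ C.s = 1 := by constructor <;> omega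
      -- look at the right neighbor of p j = p 0
      have hadj2 : gridAdj (E j) (E (j + 1)) :=
        D.hadj j (by rw [hDr]; omega) (by rw [hDs]; omega)
      have hEj : E j = C.p j := extFun_eq_mid C i j x0 x1 (by omega) le_rfl
      have hymem : E (j + 1) ∈ pathSet D :=
        p_mem_pathSet D (by rw [hDr]; omega) (by rw [hDs]; omega)
      have hybc : E (j + 1) ∈ bcond (pathSet C) (C.p j) := by
        rw [hbc j (by omega) le_rfl, hpsD]
        exact ⟨hymem, hEj ▸ hadj2⟩
      obtain ⟨⟨k', ⟨hk'1, hk'2⟩, hk'y⟩, hk'adj⟩ := hybc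
      have hk'j : k' = j + 1 ∨ j = k' + 1 := by
        refine adj_index C (by omega) (by omega) hk'1 hk'2 ?_
        rw [hk'y]; exact hk'adj
      -- k' must be s = k, so E (j+1) = p k = E (i-1)
      have hk'k : k' = k := by omega
      rw [hk'k] at hk'y
      have hEE : E (j + 1) = E (i - 1) := by rw [← hk'y]; exact hkq
      have := D.hinj (j + 1) (i - 1) (by rw [hDr]; omega) (by rw [hDs]; omega)
        (by rw [hDr]; omega) (by rw [hDs]; omega) (by show E (j + 1) = E (i - 1); exact hEE)
      omega
  · omega

end Aux4

section Aux5

/-- In a maximal-left extension situation, the right extension is forced empty. -/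
lemma forced_right_empty {C : GPath2} {x0 x1 : List (ℤ × ℤ)}
    (hx : IsExtPair C (C.r + 1) C.s x0 x1) (hrneg : C.r < 0) (hx0 : x0 ≠ []) :
    x1 = [] := by
  by_contra h1ne
  have hlen0 : 1 ≤ x0.length := List.length_pos_iff.2 hx0
  have hlen1 : 1 ≤ x1.length := List.length_pos_iff.2 h1ne
  obtain ⟨hi1, hi2, hj1, hj2, hP, hbc⟩ := hx
  set i := C.r + 1 with hidef
  set j := C.s with hjdef
  set D : GPath2 := ⟨i - x0.length, j + x1.length, extFun C i j x0 x1, hP⟩ with hD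
  set E := extFun C i j x0 x1 with hE
  have hDr : D.r = i - x0.length := rfl
  have hDs : D.s = j + x1.length := rfl
  have hpsD : E '' Set.Icc (i - (x0.length : ℤ)) (j + (x1.length : ℤ)) = pathSet D := rfl
  have hs0 := C.hs0
  -- the cell just to the right of p_j
  have hadj1 : gridAdj (E j) (E (j + 1)) :=
    D.hadj j (by rw [hDr]; omega) (by rw [hDs]; omega)
  have hEj : E j = C.p j := extFun_eq_mid C i j x0 x1 (by omega) le_rfl
  have hqmem : E (j + 1) ∈ pathSet D :=
    p_mem_pathSet D (by rw [hDr]; omega) (by rw [hDs]; omega)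
  have hqbc : E (j + 1) ∈ bcond (pathSet C) (C.p j) := by
    rw [hbc j (by omega) le_rfl, hpsD]
    exact ⟨hqmem, hEj ▸ hadj1⟩
  obtain ⟨⟨k, ⟨hk1, hk2⟩, hkq⟩, hkadj⟩ := hqbc
  have hki : k = j + 1 ∨ j = k + 1 := by
    refine adj_index C (by omega) (by omega) hk1 hk2 ?_
    rw [hkq]; exact hkadj
  rcases hki with hki | hki
  · omega
  · -- k = j - 1
    rcases le_or_gt i k with hik | hik
    · have hEk : E k = C.p k := extFun_eq_mid C i j x0 x1 hik (by omega)
      have := D.hinj (j + 1) k (by rw [hDr]; omega) (by rw [hDs]; omega)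
        (by rw [hDr]; omega) (by rw [hDs]; omega)
        (by show E (j + 1) = E k; rw [hEk]; exact hkq.symm)
      omega
    · -- k = C.r, forcing C.s = 0, C.r = -1, i = 0, j = 0
      have hspecial : C.s = 0 ∧ C.r = -1 := by omega
      have hadj2 : gridAdj (E (i - 1)) (E i) := by
        have := D.hadj (i - 1) (by rw [hDr]; omega) (by rw [hDs]; omega)
        rwa [show i - 1 + 1 = i by ring] at this
      have hEi : E i = C.p i := extFun_eq_mid C i j x0 x1 le_rfl (by omega)
      have hwmem : E (i - 1) ∈ pathSet D :=
        p_mem_pathSet D (by rw [hDr]; omega) (by rw [hDs]; omega)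
      have hwbc : E (i - 1) ∈ bcond (pathSet C) (C.p i) := by
        rw [hbc i le_rfl (by omega), hpsD]
        exact ⟨hwmem, gridAdj_symm (hEi ▸ hadj2)⟩
      obtain ⟨⟨k', ⟨hk'1, hk'2⟩, hk'w⟩, hk'adj⟩ := hwbc
      have hk'i : k' = i + 1 ∨ i = k' + 1 := by
        refine adj_index C (by omega) (by omega) hk'1 hk'2 ?_
        rw [hk'w]; exact hk'adj
      have hk'k : k' = k := by omega
      rw [hk'k] at hk'w
      have hEE : E (i - 1) = E (j + 1) := by rw [← hk'w]; exact hkq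
      have := D.hinj (i - 1) (j + 1) (by rw [hDr]; omega) (by rw [hDs]; omega)
        (by rw [hDr]; omega) (by rw [hDs]; omega) (by show E (i - 1) = E (j + 1); exact hEE)
      omega

end Aux5

section Aux6

lemma safe_right (C : GPath2) (hs : 0 < C.s) (hg : gval C C.r (C.s - 1) = ⊤)
    (t : ℕ) (ht : (t : ℤ) < 2 * C.s - C.r) : Safe t C := by
  have hr0 := C.hr0
  have hs0 := C.hs0
  obtain ⟨x0, x1, hx, hlen⟩ := exists_long_right hg (t + 2)
  have hx1ne : x1 ≠ [] := by intro h; rw [h] at hlen; simp at hlen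
  have hx0 : x0 = [] := forced_left_empty hx hs hx1ne
  subst hx0
  obtain ⟨hi1, hi2, hj1, hj2, hP, hbc⟩ := hx
  simp only [List.length_nil, Nat.cast_zero, sub_zero] at hP hbc
  set L : ℤ := (x1.length : ℤ) with hL
  have hLge : (t : ℤ) + 2 ≤ L := by rw [hL]; exact_mod_cast hlen
  set D : GPath2 := ⟨C.r, C.s - 1 + L, extFun C C.r (C.s - 1) [] x1, hP⟩ with hD
  have hpsD : pathSet D = extFun C C.r (C.s - 1) [] x1 '' Set.Icc C.r (C.s - 1 + L) := rfl
  have hmid : ∀ {m : ℤ}, C.r ≤ m → m ≤ C.s - 1 → D.p m = C.p m := fun h1 h2 =>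
    extFun_eq_mid C C.r (C.s - 1) [] x1 h1 h2
  obtain ⟨m, hm1, hm2', hm2, hmeq⟩ :
      ∃ m : ℤ, C.r ≤ m ∧ -(t : ℤ) ≤ m ∧ m ≤ 0 ∧ (m = C.r ∨ m = -(t : ℤ)) :=
    ⟨max C.r (-(t : ℤ)), le_max_left _ _, le_max_right _ _, max_le hr0 (by omega),
      max_choice _ _⟩
  have hkey : (t : ℤ) < 2 * C.s - m := by rcases hmeq with h | h <;> omega
  set S : Set ℤ := {k | C.r ≤ k ∧ k ≤ C.s - 1 ∧ k.natAbs + (k - m).natAbs ≤ t} with hS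
  -- The M-set of C
  have hMX : Mset (C.p m) t (pathSet C) = C.p '' S := by
    rw [Mset_path C hm1 (by omega) t]
    have hidx : {k | C.r ≤ k ∧ k ≤ C.s ∧ k.natAbs + (k - m).natAbs ≤ t} = S := by
      ext k
      simp only [Set.mem_setOf_eq, hS]
      constructor
      · rintro ⟨h1, h2, h3⟩; refine ⟨h1, ?_, h3⟩; omega
      · rintro ⟨h1, h2, h3⟩; refine ⟨h1, ?_, h3⟩; omega
    rw [hidx]
  -- The M-set of D
  have hMY : Mset (C.p m) t (pathSet D) = C.p '' S := by
    rw [← hmid hm1 (by omega), Mset_path D hm1 (show m ≤ D.s by show m ≤ C.s - 1 + L; omega) t]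
    have hSeq : {k | D.r ≤ k ∧ k ≤ D.s ∧ k.natAbs + (k - m).natAbs ≤ t} = S := by
      ext k
      show C.r ≤ k ∧ k ≤ C.s - 1 + L ∧ _ ↔ _
      simp only [Set.mem_setOf_eq, hS]
      constructor
      · rintro ⟨h1, h2, h3⟩; exact ⟨h1, by omega, h3⟩
      · rintro ⟨h1, h2, h3⟩; exact ⟨h1, by omega, h3⟩
    rw [hSeq]
    exact Set.image_congr fun k hk => hmid hk.1 hk.2.1
  -- boundary conditions agree on S
  have hbcS : ∀ k ∈ S, bcond (pathSet C) (C.p k) = bcond (pathSet D) (C.p k) := by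
    intro k hk
    rw [hpsD, hbc k hk.1 hk.2.1]
  -- membership and ai facts
  have horigC : ((0 : ℤ), (0 : ℤ)) = C.p 0 := C.horig.symm
  have horigD : ((0 : ℤ), (0 : ℤ)) = D.p 0 := D.horig.symm
  have hvX : C.p m ∈ pathSet C := p_mem_pathSet C hm1 (by omega)
  have hvY : C.p m ∈ pathSet D := by
    rw [← hmid hm1 (by omega)]
    exact p_mem_pathSet D hm1 (show m ≤ C.s - 1 + L by omega)
  have hcondX : C.p m ∈ pathSet C ∧ (gridGraph (pathSet C)).Reachable (0, 0) (C.p m) ∧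
      gdist (pathSet C) (0, 0) (C.p m) ≤ t := by
    refine ⟨hvX, ?_, ?_⟩
    · rw [horigC]; exact reach_path C hr0 hs0 hm1 (by omega)
    · rw [horigC, gdist_path C hr0 hs0 hm1 (by omega)]; omega
  have hcondY : C.p m ∈ pathSet D ∧ (gridGraph (pathSet D)).Reachable (0, 0) (C.p m) ∧
      gdist (pathSet D) (0, 0) (C.p m) ≤ t := by
    refine ⟨hvY, ?_, ?_⟩
    · rw [horigD, ← hmid hm1 (by omega)]
      exact reach_path D D.hr0 D.hs0 hm1 (show m ≤ C.s - 1 + L by omega)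
    · rw [horigD, ← hmid hm1 (by omega),
        gdist_path D D.hr0 D.hs0 hm1 (show m ≤ C.s - 1 + L by omega)]
      omega
  have haiX : ai (C.p m) t (pathSet C) =
      some (t, C.p m, (fun w => (w, bcond (pathSet C) w)) '' Mset (C.p m) t (pathSet C)) := by
    rw [ai, if_pos hcondX]
  have haiY : ai (C.p m) t (pathSet D) =
      some (t, C.p m, (fun w => (w, bcond (pathSet D) w)) '' Mset (C.p m) t (pathSet D)) := by
    rw [ai, if_pos hcondY]
  have himg : (fun w => (w, bcond (pathSet C) w)) '' Mset (C.p m) t (pathSet C) =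
      (fun w => (w, bcond (pathSet D) w)) '' Mset (C.p m) t (pathSet D) := by
    rw [hMX, hMY, ← Set.image_comp, ← Set.image_comp]
    refine Set.image_congr fun k hk => ?_
    simp only [Function.comp_apply]
    rw [hbcS k hk]
  refine ⟨D, Relation.ReflTransGen.single
    ⟨C.p m, hvX, hvY, by rw [haiX, haiY, himg], by rw [haiX]; exact Option.some_ne_none _⟩, ?_⟩
  rw [rad_path D]
  show t < (max (-C.r) (C.s - 1 + L)).toNat
  have := le_max_right (-C.r) (C.s - 1 + L)
  omega

end Aux6

section Aux7

lemma safe_left (C : GPath2) (hrneg : C.r < 0) (hf : fval C (C.r + 1) C.s = ⊤)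
    (t : ℕ) (ht : (t : ℤ) < C.s - 2 * C.r) : Safe t C := by
  have hr0 := C.hr0
  have hs0 := C.hs0
  obtain ⟨x0, x1, hx, hlen⟩ := exists_long_left hf (t + 2)
  have hx0ne : x0 ≠ [] := by intro h; rw [h] at hlen; simp at hlen
  have hx1 : x1 = [] := forced_right_empty hx hrneg hx0ne
  subst hx1
  obtain ⟨hi1, hi2, hj1, hj2, hP, hbc⟩ := hx
  simp only [List.length_nil, Nat.cast_zero, add_zero] at hP hbc
  set L : ℤ := (x0.length : ℤ) with hL
  have hLge : (t : ℤ) + 2 ≤ L := by rw [hL]; exact_mod_cast hlen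
  set D : GPath2 := ⟨C.r + 1 - L, C.s, extFun C (C.r + 1) C.s x0 [], hP⟩ with hD
  have hpsD : pathSet D = extFun C (C.r + 1) C.s x0 [] '' Set.Icc (C.r + 1 - L) C.s := rfl
  have hmid : ∀ {m : ℤ}, C.r + 1 ≤ m → m ≤ C.s → D.p m = C.p m := fun h1 h2 =>
    extFun_eq_mid C (C.r + 1) C.s x0 [] h1 h2
  obtain ⟨m, hm1, hm2', hm2, hmeq⟩ :
      ∃ m : ℤ, m ≤ C.s ∧ m ≤ (t : ℤ) ∧ 0 ≤ m ∧ (m = C.s ∨ m = (t : ℤ)) :=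
    ⟨min C.s (t : ℤ), min_le_left _ _, min_le_right _ _, le_min hs0 (by omega),
      min_choice _ _⟩
  have hkey : (t : ℤ) < m - 2 * C.r := by rcases hmeq with h | h <;> omega
  set S : Set ℤ := {k | C.r + 1 ≤ k ∧ k ≤ C.s ∧ k.natAbs + (k - m).natAbs ≤ t} with hS
  -- The M-set of C
  have hMX : Mset (C.p m) t (pathSet C) = C.p '' S := by
    rw [Mset_path C (by omega) hm1 t]
    have hidx : {k | C.r ≤ k ∧ k ≤ C.s ∧ k.natAbs + (k - m).natAbs ≤ t} = S := by
      ext k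
      simp only [Set.mem_setOf_eq, hS]
      constructor
      · rintro ⟨h1, h2, h3⟩; refine ⟨?_, h2, h3⟩; omega
      · rintro ⟨h1, h2, h3⟩; refine ⟨?_, h2, h3⟩; omega
    rw [hidx]
  -- The M-set of D
  have hMY : Mset (C.p m) t (pathSet D) = C.p '' S := by
    rw [← hmid (by omega) hm1,
      Mset_path D (show D.r ≤ m by show C.r + 1 - L ≤ m; omega) hm1 t]
    have hSeq : {k | D.r ≤ k ∧ k ≤ D.s ∧ k.natAbs + (k - m).natAbs ≤ t} = S := by
      ext k
      show C.r + 1 - L ≤ k ∧ k ≤ C.s ∧ _ ↔ _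
      simp only [Set.mem_setOf_eq, hS]
      constructor
      · rintro ⟨h1, h2, h3⟩; refine ⟨?_, h2, h3⟩; omega
      · rintro ⟨h1, h2, h3⟩; refine ⟨?_, h2, h3⟩; omega
    rw [hSeq]
    exact Set.image_congr fun k hk => hmid hk.1 hk.2.1
  -- boundary conditions agree on S
  have hbcS : ∀ k ∈ S, bcond (pathSet C) (C.p k) = bcond (pathSet D) (C.p k) := by
    intro k hk
    rw [hpsD, hbc k hk.1 hk.2.1]
  have horigC : ((0 : ℤ), (0 : ℤ)) = C.p 0 := C.horig.symm
  have horigD : ((0 : ℤ), (0 : ℤ)) = D.p 0 := D.horig.symm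
  have hvX : C.p m ∈ pathSet C := p_mem_pathSet C (by omega) hm1
  have hvY : C.p m ∈ pathSet D := by
    rw [← hmid (by omega) hm1]
    exact p_mem_pathSet D (show C.r + 1 - L ≤ m by omega) hm1
  have hcondX : C.p m ∈ pathSet C ∧ (gridGraph (pathSet C)).Reachable (0, 0) (C.p m) ∧
      gdist (pathSet C) (0, 0) (C.p m) ≤ t := by
    refine ⟨hvX, ?_, ?_⟩
    · rw [horigC]; exact reach_path C hr0 hs0 (by omega) hm1
    · rw [horigC, gdist_path C hr0 hs0 (by omega) hm1]; omega
  have hcondY : C.p m ∈ pathSet D ∧ (gridGraph (pathSet D)).Reachable (0, 0) (C.p m) ∧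
      gdist (pathSet D) (0, 0) (C.p m) ≤ t := by
    refine ⟨hvY, ?_, ?_⟩
    · rw [horigD, ← hmid (by omega) hm1]
      exact reach_path D D.hr0 D.hs0 (show C.r + 1 - L ≤ m by omega) hm1
    · rw [horigD, ← hmid (by omega) hm1,
        gdist_path D D.hr0 D.hs0 (show C.r + 1 - L ≤ m by omega) hm1]
      omega
  have haiX : ai (C.p m) t (pathSet C) =
      some (t, C.p m, (fun w => (w, bcond (pathSet C) w)) '' Mset (C.p m) t (pathSet C)) := by
    rw [ai, if_pos hcondX]
  have haiY : ai (C.p m) t (pathSet D) =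
      some (t, C.p m, (fun w => (w, bcond (pathSet D) w)) '' Mset (C.p m) t (pathSet D)) := by
    rw [ai, if_pos hcondY]
  have himg : (fun w => (w, bcond (pathSet C) w)) '' Mset (C.p m) t (pathSet C) =
      (fun w => (w, bcond (pathSet D) w)) '' Mset (C.p m) t (pathSet D) := by
    rw [hMX, hMY, ← Set.image_comp, ← Set.image_comp]
    refine Set.image_congr fun k hk => ?_
    simp only [Function.comp_apply]
    rw [hbcS k hk]
  refine ⟨D, Relation.ReflTransGen.single
    ⟨C.p m, hvX, hvY, by rw [haiX, haiY, himg], by rw [haiX]; exact Option.some_ne_none _⟩, ?_⟩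
  rw [rad_path D]
  show t < (max (-(C.r + 1 - L)) C.s).toNat
  have := le_max_left (-(C.r + 1 - L)) C.s
  omega

end Aux7

theorem stmt10 (C : GPath2) (hl : FreeLeft C) (hr : FreeRight C) :
    (mft C : ℤ) = -C.r + C.s + max (-C.r) C.s := by
  have hr0 := C.hr0
  have hs0 := C.hs0
  have h1 := le_max_left (-C.r) C.s
  have h2 := le_max_right (-C.r) C.s
  have hlow : ∀ t : ℕ, (t : ℤ) < C.s - C.r + max (-C.r) C.s → Safe t C := by
    intro t ht
    rcases le_total (-C.r) C.s with hc | hc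
    · rw [max_eq_right hc] at ht
      have hs1 : 0 < C.s := by omega
      rcases hr with h | h
      · omega
      · exact safe_right C hs1 h.2 t (by omega)
    · rw [max_eq_left hc] at ht
      have hr1 : C.r < 0 := by omega
      rcases hl with h | h
      · omega
      · exact safe_left C hr1 h.2 t (by omega)
  have hmft : mft C = (C.s - C.r + max (-C.r) C.s).toNat := by
    refine le_antisymm (Nat.sInf_le (not_safe C)) (le_csInf ⟨_, not_safe C⟩ ?_)
    intro b hb
    by_contra hlt
    push_neg at hlt
    exact hb (hlow b (by omega))
  rw [hmft, Int.toNat_of_nonneg (by omega)]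
  ring
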